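/- Quasi-periodicity of the ASEP R matrix: for indices a, b, i', j' ∈ ℤ_{n+1}, R(z)^{a,b}_{i',j'} = z^{δ_{j',0} - δ_{b,0}} · t^{-θ(i'≠0, j'=0) + θ(a=0, b≠0)} · R(z)^{a-1,b-1}_{i'-1,j'-1}, where the subtraction of 1 from indices is taken cyclically in ℤ_{n+1} and all indices are represented in {0,...,n} when evaluating the inequalities in the definition of R. -/
import Mathlib


/-- The ASEP R matrix: `Rmat t z a b c d = R(z)^{a,b}_{c,d}`. -/
def Rmat {K : Type*} [DivisionRing K] {n : ℕ} (t z : K) (a b c d : Fin (n + 1)) : K :=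
  if a = c ∧ b = d then
    (if c = d then 1 else (1 - z) * t ^ (if c < d then 1 else 0) / (1 - t * z))
  else if a = d ∧ b = c then (1 - t) * z ^ (if d < c then 1 else 0) / (1 - t * z)
  else 0

private lemma hv' {n : ℕ} (x : Fin (n+1)) :
    (x - 1).val = if x.val = 0 then n else x.val - 1 := by
  rw [Fin.sub_def]
  simp only [Fin.val_one']
  have hx := x.isLt
  rcases Nat.eq_zero_or_pos n with h | h
  · subst h
    have : x.val = 0 := by omega
    simp [this]
  · have h2 : (1 % (n+1)) = 1 := Nat.mod_eq_of_lt (by omega)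
    rw [h2]
    rcases Nat.eq_zero_or_pos x.val with h3 | h3
    · rw [if_pos h3]
      have : n + 1 - 1 + x.val = n := by omega
      rw [this, Nat.mod_eq_of_lt (by omega)]
    · rw [if_neg (by omega)]
      have : n + 1 - 1 + x.val = (x.val - 1) + 1 * (n+1) := by omega
      rw [this, Nat.add_mul_mod_self_right, Nat.mod_eq_of_lt (by omega)]

private lemma lt_shift {n : ℕ} {x y : Fin (n+1)} (hx : x ≠ 0) (hy : y ≠ 0) :
    (x - 1 < y - 1) ↔ x < y := by
  have hx' : x.val ≠ 0 := fun h => hx (Fin.ext h)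
  have hy' : y.val ≠ 0 := fun h => hy (Fin.ext h)
  rw [Fin.lt_def, Fin.lt_def, hv' x, hv' y, if_neg hx', if_neg hy']
  omega

private lemma lt_shift_zero {n : ℕ} {x : Fin (n+1)} (hx : x ≠ 0) :
    x - 1 < (0 : Fin (n+1)) - 1 := by
  have hx' : x.val ≠ 0 := fun h => hx (Fin.ext h)
  have hb := x.isLt
  rw [Fin.lt_def, hv' x, hv' 0]
  simp only [Fin.val_zero, if_pos rfl, if_neg hx', ite_true]
  omega

private lemma not_zero_lt_shift {n : ℕ} {y : Fin (n+1)} (hy : y ≠ 0) :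
    ¬((0 : Fin (n+1)) - 1 < y - 1) := by
  have hy' : y.val ≠ 0 := fun h => hy (Fin.ext h)
  have hb := y.isLt
  rw [Fin.lt_def, hv' y, hv' 0]
  simp only [Fin.val_zero, if_pos rfl, if_neg hy', ite_true]
  omega


set_option maxHeartbeats 1000000 in
/-- Quasi-periodicity of the ASEP R matrix: for indices in `ℤ_{n+1}` (cyclic
subtraction of 1, realized by `Fin (n+1)` arithmetic),
`R(z)^{a,b}_{i',j'} = z^{δ_{j'0} - δ_{b0}} t^{-θ(i'≠0,j'=0)+θ(a=0,b≠0)} R(z)^{a-1,b-1}_{i'-1,j'-1}`. -/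
theorem stmt4 {K : Type*} [Field K] {n : ℕ} (t z : K)
    (ht : t ≠ 0) (hz : z ≠ 0) (htz : t * z ≠ 1)
    (a b i' j' : Fin (n + 1)) :
    Rmat t z a b i' j'
      = z ^ (((if j' = 0 then 1 else 0) - (if b = 0 then 1 else 0) : ℤ)) *
        t ^ ((-(if i' ≠ 0 ∧ j' = 0 then 1 else 0) + (if a = 0 ∧ b ≠ 0 then 1 else 0) : ℤ)) *
        Rmat t z (a - 1) (b - 1) (i' - 1) (j' - 1) := by
  have h1 : (1 : K) - t * z ≠ 0 := sub_ne_zero.mpr (Ne.symm htz)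
  have hsub : ∀ x y : Fin (n+1), x - 1 = y - 1 ↔ x = y := fun x y => sub_left_inj
  rcases em (a = i' ∧ b = j') with ⟨rfl, rfl⟩ | hA
  · -- case i' = a, j' = b
    by_cases hab : a = b
    · subst hab
      simp [Rmat]
    · have hab' : ¬(a - 1 = b - 1) := fun h => hab ((hsub a b).1 h)
      by_cases hb0 : b = 0
      · subst hb0
        have ha0 : a ≠ 0 := hab
        have hl : a - 1 < (0 : Fin (n+1)) - 1 := lt_shift_zero ha0
        simp only [Rmat, hab, hab', ha0, hl, Fin.not_lt_zero, and_self,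
          if_true, if_false, ite_true, ite_false, not_false_iff, true_and,
          and_true, and_false, false_and, ne_eq, not_true, not_false_eq_true,
          if_pos rfl, pow_zero, pow_one]
        norm_num [zpow_neg, zpow_one, zpow_zero] <;> (field_simp; try ring)
      · by_cases ha0 : a = 0
        · subst ha0
          have hb0' : b ≠ 0 := fun h => hab h.symm
          have hl : (0 : Fin (n+1)) < b := Fin.pos_iff_ne_zero.2 hb0'
          have hnl : ¬((0 : Fin (n+1)) - 1 < b - 1) := not_zero_lt_shift hb0'
          simp only [Rmat, hab, hab', hb0, hb0', hl, hnl, and_self,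
            if_true, if_false, ite_true, ite_false, not_false_iff, true_and,
            and_true, and_false, false_and, ne_eq, not_true, not_false_eq_true,
            if_pos rfl, pow_zero, pow_one]
          norm_num [zpow_neg, zpow_one, zpow_zero] <;> (field_simp; try ring)
        · have hl : (a - 1 < b - 1) ↔ a < b := lt_shift ha0 hb0
          simp only [Rmat, hab, hab', ha0, hb0, hl, and_self,
            if_true, if_false, ite_true, ite_false, not_false_iff, true_and,
            and_true, and_false, false_and, ne_eq, not_true, not_false_eq_true,
            pow_zero, pow_one]
          simp
  · rcases em (a = j' ∧ b = i') with ⟨rfl, rfl⟩ | hB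
    · -- case j' = a, i' = b
      have hab : a ≠ b := fun h => hA ⟨h ▸ rfl, h ▸ rfl⟩
      have hba : b ≠ a := fun h => hab h.symm
      have hab' : ¬(a - 1 = b - 1) := fun h => hab ((hsub a b).1 h)
      have hba' : ¬(b - 1 = a - 1) := fun h => hba ((hsub b a).1 h)
      by_cases hb0 : b = 0
      · subst hb0
        have ha0 : a ≠ 0 := hab
        have hl : a - 1 < (0 : Fin (n+1)) - 1 := lt_shift_zero ha0
        simp only [Rmat, hab, hba, hab', hba', ha0, hl, Fin.not_lt_zero,
          and_self, if_true, if_false, ite_true, ite_false, not_false_iff,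
          true_and, and_true, and_false, false_and, ne_eq, not_true,
          not_false_eq_true, if_pos rfl, pow_zero, pow_one]
        norm_num [zpow_neg, zpow_one, zpow_zero] <;> (field_simp; try ring)
      · by_cases ha0 : a = 0
        · subst ha0
          have hb0' : b ≠ 0 := fun h => hab h.symm
          have hl : (0 : Fin (n+1)) < b := Fin.pos_iff_ne_zero.2 hb0'
          have hnl : ¬((0 : Fin (n+1)) - 1 < b - 1) := not_zero_lt_shift hb0'
          simp only [Rmat, hab, hba, hab', hba', hb0, hb0', hl, hnl,
            and_self, if_true, if_false, ite_true, ite_false, not_false_iff,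
            true_and, and_true, and_false, false_and, ne_eq, not_true,
            not_false_eq_true, if_pos rfl, pow_zero, pow_one]
          norm_num [zpow_neg, zpow_one, zpow_zero] <;> (field_simp; try ring)
        · have hl : (a - 1 < b - 1) ↔ a < b := lt_shift ha0 hb0
          simp only [Rmat, hab, hba, hab', hba', ha0, hb0, hl, and_self,
            if_true, if_false, ite_true, ite_false, not_false_iff, true_and,
            and_true, and_false, false_and, ne_eq, not_true, not_false_eq_true,
            pow_zero, pow_one]
          simp
    · have hA' : ¬(a - 1 = i' - 1 ∧ b - 1 = j' - 1) := by
        rw [hsub, hsub]; exact hA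
      have hB' : ¬(a - 1 = j' - 1 ∧ b - 1 = i' - 1) := by
        rw [hsub, hsub]; exact hB
      simp only [Rmat, hA, hB, hA', hB', if_false, ite_false, mul_zero]
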